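/- arXiv:2205.14840 — 3 statements merged into one kernel-verified Lean document; each statement's English description precedes it below -/
import Mathlib

section
/- Let θ₁ and θ₂ be real numbers with θ₁ ≠ θ₂, let γ > 0, and let θ̂₁, θ̂₂ be independent real-valued random variables with θ̂₁ ~ N(θ₁, γ²) and θ̂₂ ~ N(θ₂, γ²). With w = (θ̂₁ + θ̂₂)/2, the probability that w is appealing to client 1 is bounded as P((w−θ₁)² < (θ̂₁−θ₁)²) ≤ 2·exp(−γ_G²/(5γ²)), where γ_G² = ((θ₂−θ₁)/2)². -/
open MeasureTheory ProbabilityTheory Real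
open scoped NNReal ENNReal

lemma exp_mul_gaussianPDFReal (m t x : ℝ) {v : ℝ≥0} (hv : v ≠ 0) :
    Real.exp (t * x) * gaussianPDFReal m v x
      = Real.exp (t * m + v * t ^ 2 / 2) * gaussianPDFReal (m + t * v) v x := by
  have hv' : (0:ℝ) < v := by positivity
  simp only [gaussianPDFReal]
  rw [mul_left_comm, mul_left_comm (Real.exp _), ← Real.exp_add, ← Real.exp_add]
  congr 2
  field_simp
  ring

lemma integrable_exp_mul_gaussianReal (m : ℝ) {v : ℝ≥0} (hv : v ≠ 0) (t : ℝ) :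
    Integrable (fun x => Real.exp (t * x)) (gaussianReal m v) := by
  rw [gaussianReal_of_var_ne_zero m hv, integrable_withDensity_iff (measurable_gaussianPDF m v)
    (Filter.Eventually.of_forall fun x => ENNReal.ofReal_lt_top)]
  have heq : ∀ x, Real.exp (t * x) * (gaussianPDF m v x).toReal
      = Real.exp (t * m + v * t ^ 2 / 2) * gaussianPDFReal (m + t * v) v x := by
    intro x
    rw [gaussianPDF, ENNReal.toReal_ofReal (gaussianPDFReal_nonneg m v x),
      exp_mul_gaussianPDFReal m t x hv]
  simp only [heq]
  exact (integrable_gaussianPDFReal _ v).const_mul _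

lemma integral_exp_mul_gaussianReal (m : ℝ) {v : ℝ≥0} (hv : v ≠ 0) (t : ℝ) :
    ∫ x, Real.exp (t * x) ∂(gaussianReal m v) = Real.exp (t * m + v * t ^ 2 / 2) := by
  rw [gaussianReal_of_var_ne_zero m hv]
  have : (gaussianPDF m v) = fun x => ((gaussianPDFReal m v x).toNNReal : ℝ≥0∞) := rfl
  rw [this, integral_withDensity_eq_integral_smul
    ((measurable_gaussianPDFReal m v).real_toNNReal)]
  have heq : ∀ x, (gaussianPDFReal m v x).toNNReal • Real.exp (t * x)
      = Real.exp (t * m + v * t ^ 2 / 2) * gaussianPDFReal (m + t * v) v x := by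
    intro x
    rw [NNReal.smul_def, smul_eq_mul, Real.coe_toNNReal _ (gaussianPDFReal_nonneg m v x),
      mul_comm, exp_mul_gaussianPDFReal m t x hv]
  simp only [heq]
  rw [integral_const_mul, integral_gaussianPDFReal_eq_one _ hv, mul_one]

lemma chernoff_lin {Ω : Type*} [MeasurableSpace Ω] (μ : Measure Ω) [IsProbabilityMeasure μ]
    (X Y : Ω → ℝ) (hXm : Measurable X) (hYm : Measurable Y)
    (m₁ m₂ : ℝ) {v : ℝ≥0} (hv : v ≠ 0)
    (hX : Measure.map X μ = gaussianReal m₁ v) (hY : Measure.map Y μ = gaussianReal m₂ v)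
    (hindep : IndepFun X Y μ) (a b c : ℝ)
    (hm : 0 < a * m₁ + b * m₂ + c) (hab : 0 < a ^ 2 + b ^ 2) :
    μ {ω | a * X ω + b * Y ω + c ≤ 0}
      ≤ ENNReal.ofReal
        (Real.exp (-(a * m₁ + b * m₂ + c) ^ 2 / (2 * ((a ^ 2 + b ^ 2) * v)))) := by
  have hv' : (0:ℝ) < v := by
    simpa [pos_iff_ne_zero] using hv
  set M : ℝ := a * m₁ + b * m₂ + c with hM
  set σ2 : ℝ := (a ^ 2 + b ^ 2) * v with hσ2
  have hσ2pos : 0 < σ2 := by positivity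
  set t : ℝ := -M / σ2 with ht
  have htneg : t ≤ 0 := by
    rw [ht]
    apply div_nonpos_of_nonpos_of_nonneg <;> nlinarith
  -- integrability of the exponentials
  have hIX : Integrable (fun ω => Real.exp (t * a * X ω)) μ := by
    have h1 := integrable_exp_mul_gaussianReal m₁ hv (t * a)
    rw [← hX] at h1
    exact (integrable_map_measure h1.aestronglyMeasurable hXm.aemeasurable).mp h1
  have hIY : Integrable (fun ω => Real.exp (t * b * Y ω)) μ := by
    have h1 := integrable_exp_mul_gaussianReal m₂ hv (t * b)
    rw [← hY] at h1
    exact (integrable_map_measure h1.aestronglyMeasurable hYm.aemeasurable).mp h1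
  have hindep2 : IndepFun (fun ω => Real.exp (t * a * X ω))
      (fun ω => Real.exp (t * b * Y ω)) μ :=
    hindep.comp ((measurable_id.const_mul (t * a)).exp) ((measurable_id.const_mul (t * b)).exp)
  have hfun : (fun ω => Real.exp (t * (a * X ω + b * Y ω + c)))
      = fun ω => Real.exp (t * c) *
          (Real.exp (t * a * X ω) * Real.exp (t * b * Y ω)) := by
    funext ω
    rw [← Real.exp_add, ← Real.exp_add]
    ring_nf
  have hI : Integrable (fun ω => Real.exp (t * (a * X ω + b * Y ω + c))) μ := by
    rw [hfun]
    exact (hindep2.integrable_mul hIX hIY).const_mul _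
  have hEX : ∫ ω, Real.exp (t * a * X ω) ∂μ = Real.exp (t * a * m₁ + v * (t * a) ^ 2 / 2) := by
    have h1 := integral_exp_mul_gaussianReal m₁ hv (t * a)
    rw [← hX, integral_map hXm.aemeasurable] at h1
    · exact h1
    · exact (Measurable.aestronglyMeasurable (by fun_prop))
  have hEY : ∫ ω, Real.exp (t * b * Y ω) ∂μ = Real.exp (t * b * m₂ + v * (t * b) ^ 2 / 2) := by
    have h1 := integral_exp_mul_gaussianReal m₂ hv (t * b)
    rw [← hY, integral_map hYm.aemeasurable] at h1
    · exact h1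
    · exact (Measurable.aestronglyMeasurable (by fun_prop))
  have hmul : ∫ ω, Real.exp (t * a * X ω) * Real.exp (t * b * Y ω) ∂μ
      = (∫ ω, Real.exp (t * a * X ω) ∂μ) * ∫ ω, Real.exp (t * b * Y ω) ∂μ :=
    hindep2.integral_fun_mul_eq_mul_integral hIX.aestronglyMeasurable hIY.aestronglyMeasurable
  have hmgf : mgf (fun ω => a * X ω + b * Y ω + c) μ t
      = Real.exp (-M ^ 2 / (2 * σ2)) := by
    rw [mgf]
    simp only [hfun]
    rw [integral_const_mul, hmul, hEX, hEY, ← Real.exp_add, ← Real.exp_add]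
    congr 1
    rw [ht]
    field_simp
    ring
  have hbound := measure_le_le_exp_mul_mgf (X := fun ω => a * X ω + b * Y ω + c)
    (μ := μ) 0 htneg hI
  rw [hmgf] at hbound
  simp only [mul_zero, neg_zero, Real.exp_zero, one_mul] at hbound
  calc μ {ω | a * X ω + b * Y ω + c ≤ 0}
      = ENNReal.ofReal (μ {ω | a * X ω + b * Y ω + c ≤ 0}).toReal :=
        (ENNReal.ofReal_toReal (measure_ne_top μ _)).symm
    _ ≤ ENNReal.ofReal (Real.exp (-M ^ 2 / (2 * σ2))) := ENNReal.ofReal_le_ofReal hbound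

theorem fedavg_client_appeal_prob_upper_bound
    {Ω : Type*} [MeasurableSpace Ω] (μ : Measure Ω) [IsProbabilityMeasure μ]
    (θ₁ θ₂ γ : ℝ) (hne : θ₁ ≠ θ₂) (hγ : 0 < γ)
    (X Y : Ω → ℝ) (hXm : Measurable X) (hYm : Measurable Y)
    (hX : Measure.map X μ = gaussianReal θ₁ ((γ ^ 2).toNNReal))
    (hY : Measure.map Y μ = gaussianReal θ₂ ((γ ^ 2).toNNReal))
    (hindep : IndepFun X Y μ) :
    μ {ω | ((X ω + Y ω) / 2 - θ₁) ^ 2 < (X ω - θ₁) ^ 2}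
      ≤ ENNReal.ofReal (2 * Real.exp (-(((θ₂ - θ₁) / 2) ^ 2) / (5 * γ ^ 2))) := by
  have hγ2 : (0:ℝ) < γ ^ 2 := by positivity
  have hvv : (((γ ^ 2).toNNReal) : ℝ) = γ ^ 2 := Real.coe_toNNReal _ (sq_nonneg γ)
  have hv : (γ ^ 2).toNNReal ≠ 0 := by
    rw [Ne, Real.toNNReal_eq_zero, not_le]; exact hγ2
  rcases lt_or_gt_of_ne hne with hlt | hlt
  · -- θ₁ < θ₂
    have hsub : {ω | ((X ω + Y ω) / 2 - θ₁) ^ 2 < (X ω - θ₁) ^ 2} ⊆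
        {ω | (-1:ℝ) * X ω + 1 * Y ω + 0 ≤ 0}
          ∪ {ω | (3:ℝ) * X ω + 1 * Y ω + (-(4 * θ₁)) ≤ 0} := by
      intro ω hω
      simp only [Set.mem_setOf_eq] at hω
      by_contra hc
      simp only [Set.mem_union, Set.mem_setOf_eq, not_or, not_le] at hc
      nlinarith [mul_pos hc.1 hc.2]
    have h1 := chernoff_lin μ X Y hXm hYm θ₁ θ₂ hv hX hY hindep (-1) 1 0
      (by nlinarith) (by norm_num)
    have h2 := chernoff_lin μ X Y hXm hYm θ₁ θ₂ hv hX hY hindep 3 1 (-(4 * θ₁))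
      (by nlinarith) (by norm_num)
    calc μ {ω | ((X ω + Y ω) / 2 - θ₁) ^ 2 < (X ω - θ₁) ^ 2}
        ≤ μ ({ω | (-1:ℝ) * X ω + 1 * Y ω + 0 ≤ 0}
            ∪ {ω | (3:ℝ) * X ω + 1 * Y ω + (-(4 * θ₁)) ≤ 0}) := measure_mono hsub
      _ ≤ μ {ω | (-1:ℝ) * X ω + 1 * Y ω + 0 ≤ 0}
            + μ {ω | (3:ℝ) * X ω + 1 * Y ω + (-(4 * θ₁)) ≤ 0} := measure_union_le _ _
      _ ≤ ENNReal.ofReal (Real.exp (-((-1) * θ₁ + 1 * θ₂ + 0) ^ 2 /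
              (2 * (((-1:ℝ) ^ 2 + 1 ^ 2) * ((γ ^ 2).toNNReal : ℝ)))))
          + ENNReal.ofReal (Real.exp (-(3 * θ₁ + 1 * θ₂ + (-(4 * θ₁))) ^ 2 /
              (2 * (((3:ℝ) ^ 2 + 1 ^ 2) * ((γ ^ 2).toNNReal : ℝ))))) := add_le_add h1 h2
      _ = ENNReal.ofReal (Real.exp (-((-1) * θ₁ + 1 * θ₂ + 0) ^ 2 /
              (2 * (((-1:ℝ) ^ 2 + 1 ^ 2) * ((γ ^ 2).toNNReal : ℝ))))
          + Real.exp (-(3 * θ₁ + 1 * θ₂ + (-(4 * θ₁))) ^ 2 /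
              (2 * (((3:ℝ) ^ 2 + 1 ^ 2) * ((γ ^ 2).toNNReal : ℝ))))) :=
        (ENNReal.ofReal_add (Real.exp_pos _).le (Real.exp_pos _).le).symm
      _ ≤ ENNReal.ofReal (2 * Real.exp (-(((θ₂ - θ₁) / 2) ^ 2) / (5 * γ ^ 2))) := by
        apply ENNReal.ofReal_le_ofReal
        rw [hvv]
        have hT2 : -(3 * θ₁ + 1 * θ₂ + (-(4 * θ₁))) ^ 2 / (2 * (((3:ℝ) ^ 2 + 1 ^ 2) * γ ^ 2))
            = -(((θ₂ - θ₁) / 2) ^ 2) / (5 * γ ^ 2) := by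
          field_simp; ring
        have hT1 : -((-1) * θ₁ + 1 * θ₂ + 0) ^ 2 / (2 * (((-1:ℝ) ^ 2 + 1 ^ 2) * γ ^ 2))
            ≤ -(((θ₂ - θ₁) / 2) ^ 2) / (5 * γ ^ 2) := by
          rw [div_le_div_iff₀ (by positivity) (by positivity)]
          nlinarith [sq_nonneg (θ₂ - θ₁)]
        calc _ ≤ Real.exp (-(((θ₂ - θ₁) / 2) ^ 2) / (5 * γ ^ 2))
              + Real.exp (-(((θ₂ - θ₁) / 2) ^ 2) / (5 * γ ^ 2)) :=
              add_le_add (Real.exp_le_exp.mpr hT1) (le_of_eq (by rw [hT2]))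
          _ = 2 * Real.exp (-(((θ₂ - θ₁) / 2) ^ 2) / (5 * γ ^ 2)) := by ring
  · -- θ₂ < θ₁
    have hsub : {ω | ((X ω + Y ω) / 2 - θ₁) ^ 2 < (X ω - θ₁) ^ 2} ⊆
        {ω | (1:ℝ) * X ω + (-1) * Y ω + 0 ≤ 0}
          ∪ {ω | (-3:ℝ) * X ω + (-1) * Y ω + (4 * θ₁) ≤ 0} := by
      intro ω hω
      simp only [Set.mem_setOf_eq] at hω
      by_contra hc
      simp only [Set.mem_union, Set.mem_setOf_eq, not_or, not_le] at hc
      nlinarith [mul_pos hc.1 hc.2]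
    have h1 := chernoff_lin μ X Y hXm hYm θ₁ θ₂ hv hX hY hindep 1 (-1) 0
      (by nlinarith) (by norm_num)
    have h2 := chernoff_lin μ X Y hXm hYm θ₁ θ₂ hv hX hY hindep (-3) (-1) (4 * θ₁)
      (by nlinarith) (by norm_num)
    calc μ {ω | ((X ω + Y ω) / 2 - θ₁) ^ 2 < (X ω - θ₁) ^ 2}
        ≤ μ ({ω | (1:ℝ) * X ω + (-1) * Y ω + 0 ≤ 0}
            ∪ {ω | (-3:ℝ) * X ω + (-1) * Y ω + (4 * θ₁) ≤ 0}) := measure_mono hsub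
      _ ≤ μ {ω | (1:ℝ) * X ω + (-1) * Y ω + 0 ≤ 0}
            + μ {ω | (-3:ℝ) * X ω + (-1) * Y ω + (4 * θ₁) ≤ 0} := measure_union_le _ _
      _ ≤ ENNReal.ofReal (Real.exp (-(1 * θ₁ + (-1) * θ₂ + 0) ^ 2 /
              (2 * (((1:ℝ) ^ 2 + (-1) ^ 2) * ((γ ^ 2).toNNReal : ℝ)))))
          + ENNReal.ofReal (Real.exp (-((-3) * θ₁ + (-1) * θ₂ + 4 * θ₁) ^ 2 /
              (2 * (((-3:ℝ) ^ 2 + (-1) ^ 2) * ((γ ^ 2).toNNReal : ℝ))))) := add_le_add h1 h2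
      _ = ENNReal.ofReal (Real.exp (-(1 * θ₁ + (-1) * θ₂ + 0) ^ 2 /
              (2 * (((1:ℝ) ^ 2 + (-1) ^ 2) * ((γ ^ 2).toNNReal : ℝ))))
          + Real.exp (-((-3) * θ₁ + (-1) * θ₂ + 4 * θ₁) ^ 2 /
              (2 * (((-3:ℝ) ^ 2 + (-1) ^ 2) * ((γ ^ 2).toNNReal : ℝ))))) :=
        (ENNReal.ofReal_add (Real.exp_pos _).le (Real.exp_pos _).le).symm
      _ ≤ ENNReal.ofReal (2 * Real.exp (-(((θ₂ - θ₁) / 2) ^ 2) / (5 * γ ^ 2))) := by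
        apply ENNReal.ofReal_le_ofReal
        rw [hvv]
        have hT2 : -((-3) * θ₁ + (-1) * θ₂ + 4 * θ₁) ^ 2 / (2 * (((-3:ℝ) ^ 2 + (-1) ^ 2) * γ ^ 2))
            = -(((θ₂ - θ₁) / 2) ^ 2) / (5 * γ ^ 2) := by
          field_simp; ring
        have hT1 : -(1 * θ₁ + (-1) * θ₂ + 0) ^ 2 / (2 * (((1:ℝ) ^ 2 + (-1) ^ 2) * γ ^ 2))
            ≤ -(((θ₂ - θ₁) / 2) ^ 2) / (5 * γ ^ 2) := by
          rw [div_le_div_iff₀ (by positivity) (by positivity)]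
          nlinarith [sq_nonneg (θ₂ - θ₁)]
        calc _ ≤ Real.exp (-(((θ₂ - θ₁) / 2) ^ 2) / (5 * γ ^ 2))
              + Real.exp (-(((θ₂ - θ₁) / 2) ^ 2) / (5 * γ ^ 2)) :=
              add_le_add (Real.exp_le_exp.mpr hT1) (le_of_eq (by rw [hT2]))
          _ = 2 * Real.exp (-(((θ₂ - θ₁) / 2) ^ 2) / (5 * γ ^ 2)) := by ring
end

section
/- Let a < b be real numbers with b − a > 4 (equivalently γ̂_G = (b−a)/2 > 2), and let v(w) = (1/2)σ((w−a)²) + (1/2)σ((w−b)²) be the two-client MaxFL objective. Then v'(w) > 0 for every w with a + 2 < w < (a+b)/2, and by symmetry v'(w) < 0 for every w with (a+b)/2 < w < b − 2. -/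
noncomputable def sigmoid (x : ℝ) : ℝ := 1 / (1 + Real.exp (-x))

noncomputable def sg (x : ℝ) : ℝ := Real.exp (-x) / (1 + Real.exp (-x)) ^ 2

noncomputable def hh (u : ℝ) : ℝ := u * sg (u ^ 2)

lemma sigmoid_hasDerivAt (x : ℝ) : HasDerivAt sigmoid (sg x) x := by
  have h1 : HasDerivAt (fun x : ℝ => 1 + Real.exp (-x)) (-Real.exp (-x)) x := by
    simpa using ((hasDerivAt_neg x).exp.const_add 1)
  have hpos : (0:ℝ) < 1 + Real.exp (-x) := by positivity
  have h2 := h1.inv (ne_of_gt hpos)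
  have heq : sigmoid = fun x : ℝ => (1 + Real.exp (-x))⁻¹ := by
    funext y; simp [sigmoid, one_div]
  rw [heq]
  refine h2.congr_deriv ?_
  rw [sg]
  field_simp

lemma sg_hasDerivAt (x : ℝ) :
    HasDerivAt sg (Real.exp (-x) * (Real.exp (-x) - 1) / (1 + Real.exp (-x)) ^ 3) x := by
  have hN : HasDerivAt (fun x : ℝ => Real.exp (-x)) (-Real.exp (-x)) x := by
    simpa using (hasDerivAt_neg x).exp
  have hD : HasDerivAt (fun x : ℝ => (1 + Real.exp (-x)) ^ 2)
      ((2:ℕ) * (1 + Real.exp (-x)) ^ (2-1) * (-Real.exp (-x))) x := (hN.const_add 1).pow 2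
  have hpos : (0:ℝ) < 1 + Real.exp (-x) := by positivity
  have h := hN.div hD (by positivity)
  have heq : sg = fun x : ℝ => Real.exp (-x) / (1 + Real.exp (-x)) ^ 2 := rfl
  rw [heq]
  refine h.congr_deriv ?_
  field_simp
  ring

lemma hh_hasDerivAt (u : ℝ) :
    HasDerivAt hh (sg (u^2) + 2*u^2 *
      (Real.exp (-u^2) * (Real.exp (-u^2) - 1) / (1 + Real.exp (-u^2)) ^ 3)) u := by
  have hp : HasDerivAt (fun u : ℝ => u^2) (2*u) u := by
    simpa using hasDerivAt_pow 2 u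
  have h1 : HasDerivAt (fun u : ℝ => sg (u^2))
      ((Real.exp (-u^2) * (Real.exp (-u^2) - 1) / (1 + Real.exp (-u^2)) ^ 3) * (2*u)) u :=
    (sg_hasDerivAt (u^2)).comp (h₂ := sg) u hp
  have h2 := (hasDerivAt_id u).mul h1
  have heq : hh = fun u : ℝ => u * sg (u^2) := rfl
  rw [heq]
  refine h2.congr_deriv ?_
  simp only [id_eq]
  ring

lemma key_neg (u : ℝ) (hu : 2 ≤ u) :
    sg (u^2) + 2*u^2 *
      (Real.exp (-u^2) * (Real.exp (-u^2) - 1) / (1 + Real.exp (-u^2)) ^ 3) < 0 := by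
  set A := Real.exp (-u^2) with hA
  have hA0 : 0 < A := Real.exp_pos _
  have hD : (0:ℝ) < 1 + A := by linarith
  -- A * (1 + u^2/2)^2 ≤ 1
  have e1 : 1 + u^2/2 ≤ Real.exp (u^2/2) := by
    have := Real.add_one_le_exp (u^2/2); linarith
  have e2 : (1 + u^2/2)^2 ≤ Real.exp (u^2) := by
    have hx : Real.exp (u^2) = Real.exp (u^2/2) * Real.exp (u^2/2) := by
      rw [← Real.exp_add]; ring_nf
    have h0 : (0:ℝ) ≤ 1 + u^2/2 := by positivity
    nlinarith [Real.exp_pos (u^2/2)]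
  have e3 : A * Real.exp (u^2) = 1 := by
    rw [hA, ← Real.exp_add]; simp
  have hbound : A * (1 + u^2/2)^2 ≤ 1 := by
    nlinarith
  -- the numerator factor is negative
  have hnum : 1 + A + 2*u^2*(A - 1) < 0 := by
    nlinarith [sq_nonneg u, sq_nonneg (u^2)]
  have hrw : sg (u^2) + 2*u^2 * (A * (A - 1) / (1 + A) ^ 3)
      = A * (1 + A + 2*u^2*(A - 1)) / (1 + A) ^ 3 := by
    rw [sg, ← hA]
    field_simp
  rw [hrw]
  apply div_neg_of_neg_of_pos
  · nlinarith
  · positivity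

lemma hh_anti : StrictAntiOn hh (Set.Ici (2:ℝ)) := by
  apply strictAntiOn_of_deriv_neg (convex_Ici 2)
  · exact fun x _ => (hh_hasDerivAt x).continuousAt.continuousWithinAt
  · intro x hx
    rw [interior_Ici] at hx
    rw [(hh_hasDerivAt x).deriv]
    exact key_neg x (le_of_lt hx)

lemma v_hasDerivAt (a b w : ℝ) :
    HasDerivAt (fun w : ℝ => (1 / 2) * sigmoid ((w - a) ^ 2) + (1 / 2) * sigmoid ((w - b) ^ 2))
      (hh (w - a) - hh (b - w)) w := by
  have h1 : HasDerivAt (fun w : ℝ => (w - a)^2) (2*(w - a)) w := by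
    have := ((hasDerivAt_id w).sub_const a).pow 2
    refine this.congr_deriv ?_
    simp
  have h2 : HasDerivAt (fun w : ℝ => (w - b)^2) (2*(w - b)) w := by
    have := ((hasDerivAt_id w).sub_const b).pow 2
    refine this.congr_deriv ?_
    simp
  have H1 : HasDerivAt (fun w : ℝ => sigmoid ((w - a)^2)) (sg ((w - a)^2) * (2*(w - a))) w :=
    (sigmoid_hasDerivAt ((w - a)^2)).comp (h₂ := sigmoid) w h1
  have H2 : HasDerivAt (fun w : ℝ => sigmoid ((w - b)^2)) (sg ((w - b)^2) * (2*(w - b))) w :=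
    (sigmoid_hasDerivAt ((w - b)^2)).comp (h₂ := sigmoid) w h2
  have H := (H1.const_mul (1/2:ℝ)).add (H2.const_mul (1/2:ℝ))
  refine H.congr_deriv ?_
  have e : (w - b)^2 = (b - w)^2 := by ring
  simp only [hh, e]
  ring

theorem deriv_sign_between (a b : ℝ) (hab : a < b) (hsep : b - a > 4) :
    (∀ w : ℝ, a + 2 < w → w < (a + b) / 2 →
      deriv (fun w : ℝ => (1 / 2) * sigmoid ((w - a) ^ 2) + (1 / 2) * sigmoid ((w - b) ^ 2)) w
        > 0) ∧
    (∀ w : ℝ, (a + b) / 2 < w → w < b - 2 →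
      deriv (fun w : ℝ => (1 / 2) * sigmoid ((w - a) ^ 2) + (1 / 2) * sigmoid ((w - b) ^ 2)) w
        < 0) := by
  constructor
  · intro w h1 h2
    rw [(v_hasDerivAt a b w).deriv]
    have hm1 : w - a ∈ Set.Ici (2:ℝ) := by simp; linarith
    have hm2 : b - w ∈ Set.Ici (2:ℝ) := by simp; linarith
    have hlt : w - a < b - w := by linarith
    have := hh_anti hm1 hm2 hlt
    linarith
  · intro w h1 h2
    rw [(v_hasDerivAt a b w).deriv]
    have hm1 : b - w ∈ Set.Ici (2:ℝ) := by simp; linarith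
    have hm2 : w - a ∈ Set.Ici (2:ℝ) := by simp; linarith
    have hlt : b - w < w - a := by linarith
    have := hh_anti hm1 hm2 hlt
    linarith
end

section
/- Let E be a real normed vector space, let M ≥ 1, let F₁, …, F_M : E → ℝ be twice continuously differentiable, and let ρ₁, …, ρ_M ∈ ℝ. Define the MaxFL objective F̃(x) = (1/M)·Σₖ σ(Fₖ(x) − ρₖ), where σ(x) = 1/(1+exp(−x)). Fix w ∈ E and constants L_c, L_s ≥ 0 with ‖DFₖ(w)‖ ≤ L_c and ‖D²Fₖ(w)‖ ≤ L_s for every k. Then the second Fréchet derivative of F̃ at w satisfies ‖D²F̃(w)‖ ≤ (L_s/M)·Σₖ qₖ(w) + L_c²/4, where qₖ(w) = σ(Fₖ(w)−ρₖ)·(1−σ(Fₖ(w)−ρₖ)). -/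
lemma sigmoid_pos (x : ℝ) : 0 < sigmoid x := by
  unfold sigmoid; positivity

lemma sigmoid_lt_one (x : ℝ) : sigmoid x < 1 := by
  unfold sigmoid
  rw [div_lt_one (by positivity)]
  linarith [Real.exp_pos (-x)]

lemma one_add_exp_ne (x : ℝ) : 1 + Real.exp (-x) ≠ 0 := by positivity

lemma hasDerivAt_sigmoid (x : ℝ) :
    HasDerivAt sigmoid (sigmoid x * (1 - sigmoid x)) x := by
  have h : HasDerivAt (fun y : ℝ => 1 + Real.exp (-y)) (Real.exp (-x) * (-1)) x := by
    have := (Real.hasDerivAt_exp (-x)).comp x (hasDerivAt_neg x)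
    simpa using this.const_add 1
  have h2 := h.inv (one_add_exp_ne x)
  have hs : sigmoid = fun y : ℝ => (1 + Real.exp (-y))⁻¹ := by
    funext y; unfold sigmoid; rw [one_div]
  rw [hs]
  refine h2.congr_deriv ?_
  beta_reduce
  field_simp
  ring

lemma hasDerivAt_sigmoid' (x : ℝ) :
    HasDerivAt (fun y => sigmoid y * (1 - sigmoid y))
      (sigmoid x * (1 - sigmoid x) * (1 - 2 * sigmoid x)) x := by
  have h := (hasDerivAt_sigmoid x).mul ((hasDerivAt_sigmoid x).const_sub 1)
  refine h.congr_deriv ?_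
  ring

lemma sigmoid'_bound (x : ℝ) :
    |sigmoid x * (1 - sigmoid x) * (1 - 2 * sigmoid x)| ≤ 1 / 4 := by
  have h1 := sigmoid_pos x
  have h2 := sigmoid_lt_one x
  set s := sigmoid x with hs
  have hq0 : 0 ≤ s * (1 - s) := by nlinarith
  have hq : s * (1 - s) ≤ 1 / 4 := by nlinarith [sq_nonneg (1 - 2 * s)]
  have ht : |1 - 2 * s| ≤ 1 := abs_le.mpr ⟨by linarith, by linarith⟩
  rw [abs_mul, abs_of_nonneg hq0]
  calc s * (1 - s) * |1 - 2 * s| ≤ (1 / 4) * 1 :=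
        mul_le_mul hq ht (abs_nonneg _) (by norm_num)
    _ = 1 / 4 := by norm_num

lemma sigmoid_q_nonneg (x : ℝ) : 0 ≤ sigmoid x * (1 - sigmoid x) := by
  have h1 := sigmoid_pos x
  have h2 := sigmoid_lt_one x
  nlinarith

set_option synthInstance.maxHeartbeats 1000000 in
set_option maxHeartbeats 2000000 in
theorem maxfl_objective_smoothness
    {E : Type*} [NormedAddCommGroup E] [NormedSpace ℝ E]
    (M : ℕ) (hM : 1 ≤ M) (F : Fin M → E → ℝ) (ρ : Fin M → ℝ)
    (hF : ∀ k, ContDiff ℝ 2 (F k)) (w : E)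
    (Lc Ls : ℝ) (hLc : 0 ≤ Lc) (hLs : 0 ≤ Ls)
    (h1 : ∀ k, ‖fderiv ℝ (F k) w‖ ≤ Lc)
    (h2 : ∀ k, ‖fderiv ℝ (fderiv ℝ (F k)) w‖ ≤ Ls) :
    ‖fderiv ℝ (fderiv ℝ (fun x => (1 / (M : ℝ)) * ∑ k, sigmoid (F k x - ρ k))) w‖
      ≤ (Ls / (M : ℝ)) * ∑ k, sigmoid (F k w - ρ k) * (1 - sigmoid (F k w - ρ k))
        + Lc ^ 2 / 4 := by
  have hMpos : (0 : ℝ) < M := by exact_mod_cast hM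
  -- differentiability facts
  have hFd : ∀ k, Differentiable ℝ (F k) := fun k => (hF k).differentiable two_ne_zero
  have hdF : ∀ k, Differentiable ℝ (fderiv ℝ (F k)) := by
    intro k
    have h := (contDiff_succ_iff_fderiv.mp (by exact_mod_cast hF k : ContDiff ℝ (1 + 1) (F k))).2
    exact h.2.differentiable one_ne_zero
  -- first derivative of each component
  have hu : ∀ k (x : E), HasFDerivAt (fun y => F k y - ρ k) (fderiv ℝ (F k) x) x :=
    fun k x => ((hFd k x).hasFDerivAt).sub_const (ρ k)
  have hg : ∀ k (x : E), HasFDerivAt (fun y => sigmoid (F k y - ρ k))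
      ((sigmoid (F k x - ρ k) * (1 - sigmoid (F k x - ρ k))) • fderiv ℝ (F k) x) x :=
    fun k x => (hasDerivAt_sigmoid (F k x - ρ k)).comp_hasFDerivAt (f := fun y => F k y - ρ k) x (hu k x)
  -- first derivative of f
  have hf : ∀ x : E, HasFDerivAt (fun x => (1 / (M : ℝ)) * ∑ k, sigmoid (F k x - ρ k))
      ((1 / (M : ℝ)) • ∑ k, (sigmoid (F k x - ρ k) * (1 - sigmoid (F k x - ρ k))) •
        fderiv ℝ (F k) x) x := by
    intro x
    have hsum : HasFDerivAt (fun x => ∑ k, sigmoid (F k x - ρ k))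
        (∑ k, (sigmoid (F k x - ρ k) * (1 - sigmoid (F k x - ρ k))) • fderiv ℝ (F k) x) x :=
      HasFDerivAt.fun_sum (fun k _ => hg k x)
    exact hsum.const_mul _
  have hT : fderiv ℝ (fun x => (1 / (M : ℝ)) * ∑ k, sigmoid (F k x - ρ k))
      = fun x => (1 / (M : ℝ)) • ∑ k, (sigmoid (F k x - ρ k) *
          (1 - sigmoid (F k x - ρ k))) • fderiv ℝ (F k) x := by
    funext x; exact (hf x).fderiv
  -- second derivative at w
  have hφ : ∀ k, HasFDerivAt
      (fun x => sigmoid (F k x - ρ k) * (1 - sigmoid (F k x - ρ k)))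
      ((sigmoid (F k w - ρ k) * (1 - sigmoid (F k w - ρ k)) *
        (1 - 2 * sigmoid (F k w - ρ k))) • fderiv ℝ (F k) w) w :=
    fun k => (hasDerivAt_sigmoid' (F k w - ρ k)).comp_hasFDerivAt (f := fun y => F k y - ρ k) w (hu k w)
  have hψ : ∀ k, HasFDerivAt (fderiv ℝ (F k)) (fderiv ℝ (fderiv ℝ (F k)) w) w :=
    fun k => (hdF k w).hasFDerivAt
  have hD : ∀ k, HasFDerivAt
      (fun x => (sigmoid (F k x - ρ k) * (1 - sigmoid (F k x - ρ k))) • fderiv ℝ (F k) x)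
      ((sigmoid (F k w - ρ k) * (1 - sigmoid (F k w - ρ k))) • fderiv ℝ (fderiv ℝ (F k)) w
        + (((sigmoid (F k w - ρ k) * (1 - sigmoid (F k w - ρ k)) *
            (1 - 2 * sigmoid (F k w - ρ k))) • fderiv ℝ (F k) w).smulRight
            (fderiv ℝ (F k) w))) w :=
    fun k => (hφ k).smul (hψ k)
  have hD2 : HasFDerivAt (fun x => (1 / (M : ℝ)) • ∑ k, (sigmoid (F k x - ρ k) *
        (1 - sigmoid (F k x - ρ k))) • fderiv ℝ (F k) x)
      ((1 / (M : ℝ)) • ∑ k,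
        ((sigmoid (F k w - ρ k) * (1 - sigmoid (F k w - ρ k))) • fderiv ℝ (fderiv ℝ (F k)) w
        + (((sigmoid (F k w - ρ k) * (1 - sigmoid (F k w - ρ k)) *
            (1 - 2 * sigmoid (F k w - ρ k))) • fderiv ℝ (F k) w).smulRight
            (fderiv ℝ (F k) w)))) w :=
    (HasFDerivAt.fun_sum (fun k _ => hD k)).fun_const_smul _
  rw [hT, hD2.fderiv]
  -- norm bounds
  have hbound : ∀ k : Fin M,
      ‖(sigmoid (F k w - ρ k) * (1 - sigmoid (F k w - ρ k))) • fderiv ℝ (fderiv ℝ (F k)) w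
        + (((sigmoid (F k w - ρ k) * (1 - sigmoid (F k w - ρ k)) *
            (1 - 2 * sigmoid (F k w - ρ k))) • fderiv ℝ (F k) w).smulRight
            (fderiv ℝ (F k) w))‖
      ≤ sigmoid (F k w - ρ k) * (1 - sigmoid (F k w - ρ k)) * Ls + Lc ^ 2 / 4 := by
    intro k
    set q := sigmoid (F k w - ρ k) * (1 - sigmoid (F k w - ρ k)) with hqdef
    have hq0 : 0 ≤ q := sigmoid_q_nonneg _
    refine (norm_add_le (E := E →L[ℝ] E →L[ℝ] ℝ) _ _).trans ?_
    have e1 : ‖q • fderiv ℝ (fderiv ℝ (F k)) w‖ ≤ q * Ls := by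
      refine (ContinuousLinearMap.opNorm_smul_le q _).trans ?_
      rw [Real.norm_eq_abs, abs_of_nonneg hq0]
      exact mul_le_mul_of_nonneg_left (h2 k) hq0
    have e2 : ‖((sigmoid (F k w - ρ k) * (1 - sigmoid (F k w - ρ k)) *
          (1 - 2 * sigmoid (F k w - ρ k))) • fderiv ℝ (F k) w).smulRight
          (fderiv ℝ (F k) w)‖ ≤ Lc ^ 2 / 4 := by
      refine (ContinuousLinearMap.norm_smulRight_apply _ _).le.trans ?_
      have := sigmoid'_bound (F k w - ρ k)
      have h1k := h1 k
      calc ‖(sigmoid (F k w - ρ k) * (1 - sigmoid (F k w - ρ k)) *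
            (1 - 2 * sigmoid (F k w - ρ k))) • fderiv ℝ (F k) w‖ * ‖fderiv ℝ (F k) w‖
          ≤ ((1/4) * Lc) * Lc := by
            refine mul_le_mul ?_ h1k (norm_nonneg _) (by positivity)
            refine (ContinuousLinearMap.opNorm_smul_le _ _).trans ?_
            rw [Real.norm_eq_abs]
            exact mul_le_mul this h1k (norm_nonneg _) (by norm_num)
        _ = Lc ^ 2 / 4 := by ring
    linarith
  have key : ‖(1 / (M : ℝ)) • ∑ k : Fin M,
      ((sigmoid (F k w - ρ k) * (1 - sigmoid (F k w - ρ k))) • fderiv ℝ (fderiv ℝ (F k)) w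
        + (((sigmoid (F k w - ρ k) * (1 - sigmoid (F k w - ρ k)) *
            (1 - 2 * sigmoid (F k w - ρ k))) • fderiv ℝ (F k) w).smulRight
            (fderiv ℝ (F k) w)))‖
      ≤ (1 / (M : ℝ)) * ∑ k : Fin M, (sigmoid (F k w - ρ k) * (1 - sigmoid (F k w - ρ k)) * Ls
          + Lc ^ 2 / 4) := by
    refine (ContinuousLinearMap.opNorm_smul_le _ _).trans ?_
    rw [Real.norm_eq_abs, abs_of_nonneg (by positivity : (0:ℝ) ≤ 1 / (M : ℝ))]
    refine mul_le_mul_of_nonneg_left ?_ (by positivity)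
    exact (norm_sum_le _ _).trans (Finset.sum_le_sum (fun k _ => hbound k))
  refine key.trans (le_of_eq ?_)
  rw [Finset.sum_add_distrib, Finset.sum_const, Finset.card_univ, Fintype.card_fin,
    ← Finset.sum_mul]
  field_simp
  ring
end
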